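/- Let X be a compact Hausdorff topological space, let p be a projection in M_N(C(X)), and let n ∈ ℕ. Let p^{⊕n} ∈ M_{nN}(C(X)) denote the block-diagonal projection with n diagonal blocks equal to p. Then e₁₁ ≾ p^{⊕n} (i.e., there exists v ∈ M_{nN}(C(X)) with v*v = e₁₁ and vv* ≤ p^{⊕n}) if and only if there exist continuous maps s₁, …, sₙ : X → ℂᴺ with p(x)s_j(x) = s_j(x) for all x and all j, such that for every x ∈ X at least one s_j(x) ≠ 0. Consequently, if e₁₁ ⋠ p^{⊕n}, then any n continuous sections of ξ_p vanish simultaneously at some point of X. -/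

import Mathlib

open Matrix ComplexOrder

lemma proj_absorb {m : Type*} [Fintype m] [DecidableEq m]
    (P v : Matrix m m ℂ) (hP2 : P * P = P) (hPh : Pᴴ = P)
    (hpsd : (P - v * vᴴ).PosSemidef) : P * v = v := by
  set M := (1 - P) * v with hM
  have hMh : Mᴴ = vᴴ * (1 - P) := by
    rw [hM, conjTranspose_mul, conjTranspose_sub, conjTranspose_one, hPh]
  have h0 : (1 - P) * P = 0 := by rw [sub_mul, one_mul, hP2, sub_self]
  have e1 : (1 - P) * (P - v * vᴴ) = -(M * vᴴ) := by
    rw [mul_sub, h0, hM]; noncomm_ring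
  have hkey : M * Mᴴ = -((1 - P) * (P - v * vᴴ) * (1 - P)) := by
    rw [e1, hMh]; noncomm_ring
  have hps1 : ((1 - P) * (P - v * vᴴ) * (1 - P)).PosSemidef := by
    have h := hpsd.mul_mul_conjTranspose_same (1 - P)
    rwa [conjTranspose_sub, conjTranspose_one, hPh] at h
  have hps2 := posSemidef_self_mul_conjTranspose M
  have hzero : M * Mᴴ = 0 := by
    have hmv : ∀ x : m → ℂ, (M * Mᴴ) *ᵥ x = 0 := by
      intro x
      refine (hps2.dotProduct_mulVec_zero_iff x).mp ?_
      have h1 : 0 ≤ star x ⬝ᵥ (M * Mᴴ) *ᵥ x := hps2.dotProduct_mulVec_nonneg x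
      have h2 : 0 ≤ star x ⬝ᵥ ((1 - P) * (P - v * vᴴ) * (1 - P)) *ᵥ x := hps1.dotProduct_mulVec_nonneg x
      have h3 : star x ⬝ᵥ ((1 - P) * (P - v * vᴴ) * (1 - P)) *ᵥ x
          = -(star x ⬝ᵥ (M * Mᴴ) *ᵥ x) := by
        rw [show (1 - P) * (P - v * vᴴ) * (1 - P) = -(M * Mᴴ) by rw [hkey, neg_neg]]
        simp [neg_mulVec]
      rw [h3] at h2
      exact le_antisymm (neg_nonneg.mp h2) h1
    ext i j
    have := congrFun (hmv (Pi.single j 1)) i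
    simpa using this
  have hM0 : M = 0 := self_mul_conjTranspose_eq_zero.mp hzero
  have : (1 : Matrix m m ℂ) * v - P * v = 0 := by rw [← sub_mul, ← hM, hM0]
  rw [one_mul, sub_eq_zero] at this
  exact this.symm

lemma proj_sub_psd {m : Type*} [Fintype m] [DecidableEq m]
    (P Q : Matrix m m ℂ) (hP2 : P * P = P) (hPh : Pᴴ = P)
    (hQ2 : Q * Q = Q) (hQh : Qᴴ = Q) (hPQ : P * Q = Q) (hQP : Q * P = Q) :
    (P - Q).PosSemidef := by
  have h : (P - Q)ᴴ * (P - Q) = P - Q := by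
    rw [conjTranspose_sub, hPh, hQh, sub_mul, mul_sub, mul_sub, hP2, hQ2, hPQ, hQP]
    abel
  rw [← h]
  exact posSemidef_conjTranspose_mul_self _

lemma blockDiag_mul_apply {N n : ℕ} {m : Type*} [Fintype m]
    (q : Matrix (Fin N) (Fin N) ℂ) (A : Matrix (Fin N × Fin n) m ℂ)
    (i : Fin N) (j : Fin n) (b : m) :
    (blockDiagonal (fun _ : Fin n => q) * A) (i, j) b = ∑ i', q i i' * A (i', j) b := by
  rw [mul_apply, Fintype.sum_prod_type]
  simp [blockDiagonal_apply, ite_mul, Finset.sum_ite_eq]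

theorem stmt_5 (X : Type*) [TopologicalSpace X] [CompactSpace X] [T2Space X]
    (N : ℕ) (hN : 0 < N) (n : ℕ) (hn : 0 < n)
    (p : X → Matrix (Fin N) (Fin N) ℂ) (hp : Continuous p)
    (hproj : ∀ x, p x * p x = p x ∧ (p x)ᴴ = p x) :
    ((∃ v : X → Matrix (Fin N × Fin n) (Fin N × Fin n) ℂ, Continuous v ∧
        (∀ x, (v x)ᴴ * v x =
          Matrix.single (⟨0, hN⟩, ⟨0, hn⟩) (⟨0, hN⟩, ⟨0, hn⟩) 1) ∧
        (∀ x, (Matrix.blockDiagonal (fun _ : Fin n => p x) - v x * (v x)ᴴ).PosSemidef)) ↔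
      (∃ s : Fin n → X → Fin N → ℂ, (∀ j, Continuous (s j)) ∧
        (∀ j x, p x *ᵥ s j x = s j x) ∧ (∀ x, ∃ j, s j x ≠ 0))) ∧
    ((¬ ∃ v : X → Matrix (Fin N × Fin n) (Fin N × Fin n) ℂ, Continuous v ∧
        (∀ x, (v x)ᴴ * v x =
          Matrix.single (⟨0, hN⟩, ⟨0, hn⟩) (⟨0, hN⟩, ⟨0, hn⟩) 1) ∧
        (∀ x, (Matrix.blockDiagonal (fun _ : Fin n => p x) - v x * (v x)ᴴ).PosSemidef)) →
      ∀ s : Fin n → X → Fin N → ℂ, (∀ j, Continuous (s j)) →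
        (∀ j x, p x *ᵥ s j x = s j x) → ∃ x, ∀ j, s j x = 0) := by
  have main : (∃ v : X → Matrix (Fin N × Fin n) (Fin N × Fin n) ℂ, Continuous v ∧
        (∀ x, (v x)ᴴ * v x =
          Matrix.single (⟨0, hN⟩, ⟨0, hn⟩) (⟨0, hN⟩, ⟨0, hn⟩) 1) ∧
        (∀ x, (Matrix.blockDiagonal (fun _ : Fin n => p x) - v x * (v x)ᴴ).PosSemidef)) ↔
      (∃ s : Fin n → X → Fin N → ℂ, (∀ j, Continuous (s j)) ∧
        (∀ j x, p x *ᵥ s j x = s j x) ∧ (∀ x, ∃ j, s j x ≠ 0)) := by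
    constructor
    · rintro ⟨v, hv, hv1, hv2⟩
      have hP2 : ∀ x, blockDiagonal (fun _ : Fin n => p x) * blockDiagonal (fun _ : Fin n => p x)
          = blockDiagonal (fun _ : Fin n => p x) := by
        intro x
        rw [← blockDiagonal_mul]
        exact congrArg _ (funext fun _ => (hproj x).1)
      have hPh : ∀ x, (blockDiagonal (fun _ : Fin n => p x))ᴴ
          = blockDiagonal (fun _ : Fin n => p x) := by
        intro x
        rw [blockDiagonal_conjTranspose]
        exact congrArg _ (funext fun _ => (hproj x).2)
      have hPv : ∀ x, blockDiagonal (fun _ : Fin n => p x) * v x = v x := fun x =>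
        proj_absorb _ _ (hP2 x) (hPh x) (hv2 x)
      refine ⟨fun j x i => v x (i, j) (⟨0, hN⟩, ⟨0, hn⟩), ?_, ?_, ?_⟩
      · intro j
        exact continuous_pi fun i =>
          (continuous_apply _).comp ((continuous_apply (i, j)).comp hv)
      · intro j x
        funext i
        have h := congrFun (congrFun (hPv x) (i, j)) (⟨0, hN⟩, ⟨0, hn⟩)
        rw [blockDiag_mul_apply] at h
        simpa [mulVec, dotProduct] using h
      · intro x
        by_contra hcon
        push_neg at hcon
        have hz : ∀ a : Fin N × Fin n, v x a (⟨0, hN⟩, ⟨0, hn⟩) = 0 := fun a =>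
          congrFun (hcon a.2) a.1
        have h1 := congrFun (congrFun (hv1 x) (⟨0, hN⟩, ⟨0, hn⟩)) (⟨0, hN⟩, ⟨0, hn⟩)
        rw [mul_apply] at h1
        simp [conjTranspose_apply, hz] at h1
    · rintro ⟨s, hc, hsec, hnv⟩
      classical
      set k₀ : Fin N × Fin n := (⟨0, hN⟩, ⟨0, hn⟩) with hk0
      set g : X → ℝ := fun x => ∑ j : Fin n, ∑ i : Fin N, Complex.normSq (s j x i) with hg
      have hgc : Continuous g := by
        refine continuous_finset_sum _ fun j _ => continuous_finset_sum _ fun i _ => ?_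
        exact Complex.continuous_normSq.comp ((continuous_apply i).comp (hc j))
      have hgpos : ∀ x, 0 < g x := by
        intro x
        obtain ⟨j, hj⟩ := hnv x
        obtain ⟨i, hi⟩ := Function.ne_iff.mp hj
        refine Finset.sum_pos'
          (fun j' _ => Finset.sum_nonneg fun i' _ => Complex.normSq_nonneg _)
          ⟨j, Finset.mem_univ _, ?_⟩
        exact Finset.sum_pos' (fun i' _ => Complex.normSq_nonneg _)
          ⟨i, Finset.mem_univ _, Complex.normSq_pos.mpr hi⟩
      set t : X → ℝ := fun x => (Real.sqrt (g x))⁻¹ with ht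
      have htc : Continuous t :=
        (Real.continuous_sqrt.comp hgc).inv₀ fun x =>
          ne_of_gt (Real.sqrt_pos.mpr (hgpos x))
      set w : X → (Fin N × Fin n) → ℂ := fun x a => (t x : ℂ) * s a.2 x a.1 with hw
      set v : X → Matrix (Fin N × Fin n) (Fin N × Fin n) ℂ :=
        fun x => Matrix.of fun a b => if b = k₀ then w x a else 0 with hv
      have hsec' : ∀ j x i, ∑ i', p x i i' * s j x i' = s j x i := fun j x i => by
        have h := congrFun (hsec j x) i
        simpa [mulVec, dotProduct] using h
      have hwnorm : ∀ x, ∑ a : Fin N × Fin n, star (w x a) * w x a = 1 := by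
        intro x
        have hterm : ∀ a : Fin N × Fin n, star (w x a) * w x a
            = ((t x * t x * Complex.normSq (s a.2 x a.1) : ℝ) : ℂ) := by
          intro a
          rw [hw]
          simp only [star_mul', Complex.star_def, Complex.conj_ofReal]
          push_cast
          rw [show ∀ c z : ℂ, c * (starRingEnd ℂ z) * (c * z)
            = c * c * ((starRingEnd ℂ z) * z) from fun c z => by ring]
          rw [← Complex.normSq_eq_conj_mul_self]
        rw [Finset.sum_congr rfl fun a _ => hterm a, ← Complex.ofReal_sum,
          ← Finset.mul_sum]
        have hsum : ∑ a : Fin N × Fin n, Complex.normSq (s a.2 x a.1) = g x := by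
          rw [hg, Fintype.sum_prod_type, Finset.sum_comm]
        rw [hsum]
        have : t x * t x * g x = 1 := by
          have h1 : Real.sqrt (g x) * Real.sqrt (g x) = g x :=
            Real.mul_self_sqrt (le_of_lt (hgpos x))
          have h2 : Real.sqrt (g x) ≠ 0 := ne_of_gt (Real.sqrt_pos.mpr (hgpos x))
          rw [ht, ← h1]
          field_simp
        rw [this, Complex.ofReal_one]
      have hvv : ∀ x, (v x)ᴴ * v x = single k₀ k₀ (1 : ℂ) := by
        intro x
        ext a b
        rw [mul_apply]
        by_cases ha : a = k₀ <;> by_cases hb : b = k₀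
        · subst ha; subst hb
          simp only [hv, conjTranspose_apply, Matrix.of_apply, if_pos rfl,
            single_apply_same]
          exact hwnorm x
        · simp [hv, conjTranspose_apply, ha, hb, single, eq_comm]
        · simp [hv, conjTranspose_apply, ha, hb, single, eq_comm]
        · simp [hv, conjTranspose_apply, ha, hb, single, eq_comm]
      have hP2 : ∀ x, blockDiagonal (fun _ : Fin n => p x) * blockDiagonal (fun _ : Fin n => p x)
          = blockDiagonal (fun _ : Fin n => p x) := by
        intro x
        rw [← blockDiagonal_mul]
        exact congrArg _ (funext fun _ => (hproj x).1)
      have hPh : ∀ x, (blockDiagonal (fun _ : Fin n => p x))ᴴ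
          = blockDiagonal (fun _ : Fin n => p x) := by
        intro x
        rw [blockDiagonal_conjTranspose]
        exact congrArg _ (funext fun _ => (hproj x).2)
      have hPv : ∀ x, blockDiagonal (fun _ : Fin n => p x) * v x = v x := by
        intro x
        ext ⟨i, j⟩ b
        rw [blockDiag_mul_apply]
        by_cases hb : b = k₀
        · subst hb
          simp only [hv, hw, Matrix.of_apply, if_pos rfl]
          calc ∑ i', p x i i' * ((t x : ℂ) * s j x i')
              = (t x : ℂ) * ∑ i', p x i i' * s j x i' := by
                rw [Finset.mul_sum]
                exact Finset.sum_congr rfl fun i' _ => by ring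
            _ = (t x : ℂ) * s j x i := by rw [hsec' j x i]
        · simp [hv, hb]
      have hvE : ∀ x, v x * single k₀ k₀ (1 : ℂ) = v x := by
        intro x
        ext a b
        rw [mul_apply]
        by_cases hb : b = k₀ <;>
          simp [hv, single, hb, eq_comm]
      have hQh : ∀ x, (v x * (v x)ᴴ)ᴴ = v x * (v x)ᴴ := fun x => by
        rw [conjTranspose_mul, conjTranspose_conjTranspose]
      have hQ2 : ∀ x, (v x * (v x)ᴴ) * (v x * (v x)ᴴ) = v x * (v x)ᴴ := by
        intro x
        calc (v x * (v x)ᴴ) * (v x * (v x)ᴴ) = (v x * ((v x)ᴴ * v x)) * (v x)ᴴ := by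
              noncomm_ring
          _ = v x * (v x)ᴴ := by rw [hvv x, hvE x]
      have hPQ : ∀ x, blockDiagonal (fun _ : Fin n => p x) * (v x * (v x)ᴴ) = v x * (v x)ᴴ := by
        intro x
        rw [← mul_assoc, hPv x]
      have hQP : ∀ x, (v x * (v x)ᴴ) * blockDiagonal (fun _ : Fin n => p x) = v x * (v x)ᴴ := by
        intro x
        have h := congrArg conjTranspose (hPQ x)
        rwa [conjTranspose_mul, hQh x, hPh x] at h
      refine ⟨v, ?_, hvv, fun x => proj_sub_psd _ _ (hP2 x) (hPh x) (hQ2 x) (hQh x) (hPQ x) (hQP x)⟩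
      · refine continuous_pi fun a => continuous_pi fun b => ?_
        by_cases hb : b = k₀
        · simp only [hv, Matrix.of_apply, if_pos hb]
          exact (Complex.continuous_ofReal.comp htc).mul
            ((continuous_apply a.1).comp (hc a.2))
        · simp only [hv, Matrix.of_apply, if_neg hb]
          exact continuous_const
  exact ⟨main, fun hnot s hcs hsecs => by
    by_contra hcon
    push_neg at hcon
    exact hnot (main.mpr ⟨s, hcs, hsecs, fun x => by
      obtain ⟨j, hj⟩ := hcon x
      exact ⟨j, hj⟩⟩)⟩
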